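/- In the tree-recognition system, if G is an input tree and G ⇒*_𝓡 H, then the unique root node of H has no △-labelled children (a node u is a child of v if some edge has source v and target u). -/

import Mathlib

/-! # Rooted graph transformation with relabelling -/

/-- A graph over a label alphabet `(LV, LE)`: finite vertex and edge sets, total
source/target functions, a partial node-labelling function `l`, a total
edge-labelling function `m`, and a partial rootedness function `p`
(`some true` = root node, `some false` = non-root, `none` = undefined). -/
structure RGraph (LV LE : Type) : Type 1 where
  V : Type
  E : Type
  finV : Finite V
  finE : Finite E
  s : E → V
  t : E → V
  l : V → Option LV
  m : E → LE
  p : V → Option Bool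

namespace RGraph

variable {LV LE : Type}

def IsTotallyLabelled (G : RGraph LV LE) : Prop := ∀ v, (G.l v).isSome
def IsTotallyRooted (G : RGraph LV LE) : Prop := ∀ v, (G.p v).isSome
/-- totally labelled, totally rooted graph -/
def IsTLRG (G : RGraph LV LE) : Prop := G.IsTotallyLabelled ∧ G.IsTotallyRooted

/-- The number of root nodes `|p⁻¹({1})|`. -/
noncomputable def rootCount (G : RGraph LV LE) : ℕ := Nat.card {v : G.V // G.p v = some true}

/-- The degree of a node. -/
noncomputable def degree (G : RGraph LV LE) (v : G.V) : ℕ :=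
  Nat.card {e : G.E // G.s e = v} + Nat.card {e : G.E // G.t e = v}

end RGraph

/-- RGraph morphisms preserve sources, targets, edge labels, and node labels and
rootedness wherever these are defined. -/
structure Morphism {LV LE : Type} (G H : RGraph LV LE) : Type where
  fV : G.V → H.V
  fE : G.E → H.E
  src : ∀ e, fV (G.s e) = H.s (fE e)
  tgt : ∀ e, fV (G.t e) = H.t (fE e)
  edgeLabel : ∀ e, G.m e = H.m (fE e)
  nodeLabel : ∀ v x, G.l v = some x → H.l (fV v) = some x
  rootedness : ∀ v b, G.p v = some b → H.p (fV v) = some b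

namespace Morphism

variable {LV LE : Type} {G H K : RGraph LV LE}

def Injective (g : Morphism G H) : Prop := Function.Injective g.fV ∧ Function.Injective g.fE

/-- identity morphism -/
def ident (G : RGraph LV LE) : Morphism G G where
  fV := id
  fE := id
  src := fun _ => rfl
  tgt := fun _ => rfl
  edgeLabel := fun _ => rfl
  nodeLabel := fun _ _ h => h
  rootedness := fun _ _ h => h

/-- composition of morphisms -/
def comp (g : Morphism G H) (h : Morphism H K) : Morphism G K where
  fV := h.fV ∘ g.fV
  fE := h.fE ∘ g.fE
  src := fun e => by simp [Function.comp, g.src e, h.src (g.fE e)]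
  tgt := fun e => by simp [Function.comp, g.tgt e, h.tgt (g.fE e)]
  edgeLabel := fun e => by simp [Function.comp, ← h.edgeLabel (g.fE e), g.edgeLabel e]
  nodeLabel := fun v x hx => h.nodeLabel _ _ (g.nodeLabel v x hx)
  rootedness := fun v b hb => h.rootedness _ _ (g.rootedness v b hb)

end Morphism

/-- An isomorphism of graphs: a morphism with a two-sided inverse morphism. -/
structure Iso {LV LE : Type} (G H : RGraph LV LE) : Type where
  toMor : Morphism G H
  invMor : Morphism H G
  leftV : ∀ v, invMor.fV (toMor.fV v) = v
  leftE : ∀ e, invMor.fE (toMor.fE e) = e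
  rightV : ∀ v, toMor.fV (invMor.fV v) = v
  rightE : ∀ e, toMor.fE (invMor.fE e) = e

/-- A rule `⟨L ← K → R⟩`: graphs `L`, `K`, `R` together with inclusion
(injective) morphisms `K ↪ L` and `K ↪ R`.  (In the rooted relabelling setting
`L` and `R` are additionally required to be TLRGs; this requirement is stated
as a hypothesis where needed.) -/
structure Rule (LV LE : Type) : Type 1 where
  L : RGraph LV LE
  K : RGraph LV LE
  R : RGraph LV LE
  incL : Morphism K L
  incR : Morphism K R
  injL : incL.Injective
  injR : incR.Injective

namespace Rule

variable {LV LE : Type} (r : Rule LV LE) (G : RGraph LV LE)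

/-- The inverse rule `r⁻¹ = ⟨R ← K → L⟩`. -/
def inv (r : Rule LV LE) : Rule LV LE where
  L := r.R
  K := r.K
  R := r.L
  incL := r.incR
  incR := r.incL
  injL := r.injR
  injR := r.injL

/-- The dangling condition: no edge of `G ∖ g(L)` is incident to a node of `g(L ∖ K)`. -/
def Dangling (g : Morphism r.L G) : Prop :=
  ∀ e : G.E, (∀ e' : r.L.E, g.fE e' ≠ e) →
    ∀ v : r.L.V, (∀ k : r.K.V, r.incL.fV k ≠ v) →
      G.s e ≠ g.fV v ∧ G.t e ≠ g.fV v

/-- The match `g` is applicable: it is injective and satisfies the dangling condition. -/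
def Applicable (g : Morphism r.L G) : Prop := g.Injective ∧ r.Dangling G g

/-- the nodes `g(L ∖ K)` deleted by applying `r` via `g` -/
def DelV (g : Morphism r.L G) : Set G.V :=
  {x | ∃ v : r.L.V, (∀ k : r.K.V, r.incL.fV k ≠ v) ∧ g.fV v = x}

/-- the edges `g(L ∖ K)` deleted by applying `r` via `g` -/
def DelE (g : Morphism r.L G) : Set G.E :=
  {x | ∃ e : r.L.E, (∀ k : r.K.E, r.incL.fE k ≠ e) ∧ g.fE e = x}

theorem kept_incL {g : Morphism r.L G} (hinj : g.Injective) (k : r.K.V) :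
    g.fV (r.incL.fV k) ∉ r.DelV G g := by
  rintro ⟨v, hv, heq⟩
  exact hv k (hinj.1 heq).symm

theorem kept_src {g : Morphism r.L G} (h : r.Applicable G g) {e : G.E}
    (he : e ∉ r.DelE G g) : G.s e ∉ r.DelV G g := by
  rintro ⟨v, hv, heq⟩
  by_cases hc : ∃ e', g.fE e' = e
  · obtain ⟨e', rfl⟩ := hc
    by_cases hk : ∃ k, r.incL.fE k = e'
    · obtain ⟨k, rfl⟩ := hk
      have h1 : g.fV (r.L.s (r.incL.fE k)) = G.s (g.fE (r.incL.fE k)) := g.src _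
      have h2 : r.incL.fV (r.K.s k) = r.L.s (r.incL.fE k) := r.incL.src k
      have h3 : g.fV v = g.fV (r.incL.fV (r.K.s k)) := by rw [heq, h2, h1]
      exact hv _ (h.1.1 h3).symm
    · exact he ⟨e', fun k hk' => hk ⟨k, hk'⟩, rfl⟩
  · exact (h.2 e (fun e' he' => hc ⟨e', he'⟩) v hv).1 heq.symm

theorem kept_tgt {g : Morphism r.L G} (h : r.Applicable G g) {e : G.E}
    (he : e ∉ r.DelE G g) : G.t e ∉ r.DelV G g := by
  rintro ⟨v, hv, heq⟩
  by_cases hc : ∃ e', g.fE e' = e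
  · obtain ⟨e', rfl⟩ := hc
    by_cases hk : ∃ k, r.incL.fE k = e'
    · obtain ⟨k, rfl⟩ := hk
      have h1 : g.fV (r.L.t (r.incL.fE k)) = G.t (g.fE (r.incL.fE k)) := g.tgt _
      have h2 : r.incL.fV (r.K.t k) = r.L.t (r.incL.fE k) := r.incL.tgt k
      have h3 : g.fV v = g.fV (r.incL.fV (r.K.t k)) := by rw [heq, h2, h1]
      exact hv _ (h.1.1 h3).symm
    · exact he ⟨e', fun k hk' => hk ⟨k, hk'⟩, rfl⟩
  · exact (h.2 e (fun e' he' => hc ⟨e', he'⟩) v hv).2 heq.symm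

attribute [local instance] Classical.propDecidable

/-- The result graph of applying `r` to `G` via an applicable match `g`:
delete `g(L ∖ K)` (undefining labels/rootedness of images of interface nodes
where they are undefined in `K`), then add `R ∖ K` disjointly, relabelling
(and re-rooting) the images of interface nodes according to `R`. -/
noncomputable def result (g : Morphism r.L G) (h : r.Applicable G g) : RGraph LV LE where
  V := {x : G.V // x ∉ r.DelV G g} ⊕ {v : r.R.V // ∀ k, r.incR.fV k ≠ v}
  E := {x : G.E // x ∉ r.DelE G g} ⊕ {e : r.R.E // ∀ k, r.incR.fE k ≠ e}
  finV := by
    haveI := G.finV; haveI := r.R.finV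
    infer_instance
  finE := by
    haveI := G.finE; haveI := r.R.finE
    infer_instance
  s := fun e =>
    match e with
    | Sum.inl x => Sum.inl ⟨G.s x.1, r.kept_src G h x.2⟩
    | Sum.inr x =>
        if hk : ∃ k, r.incR.fV k = r.R.s x.1 then
          Sum.inl ⟨g.fV (r.incL.fV hk.choose), r.kept_incL G h.1 _⟩
        else Sum.inr ⟨r.R.s x.1, fun k hk' => hk ⟨k, hk'⟩⟩
  t := fun e =>
    match e with
    | Sum.inl x => Sum.inl ⟨G.t x.1, r.kept_tgt G h x.2⟩
    | Sum.inr x =>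
        if hk : ∃ k, r.incR.fV k = r.R.t x.1 then
          Sum.inl ⟨g.fV (r.incL.fV hk.choose), r.kept_incL G h.1 _⟩
        else Sum.inr ⟨r.R.t x.1, fun k hk' => hk ⟨k, hk'⟩⟩
  l := fun v =>
    match v with
    | Sum.inl x =>
        if hk : ∃ k : r.K.V, r.K.l k = none ∧ g.fV (r.incL.fV k) = x.1 then
          r.R.l (r.incR.fV hk.choose)
        else G.l x.1
    | Sum.inr v => r.R.l v.1
  m := fun e =>
    match e with
    | Sum.inl x => G.m x.1
    | Sum.inr x => r.R.m x.1
  p := fun v =>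
    match v with
    | Sum.inl x =>
        if hk : ∃ k : r.K.V, r.K.p k = none ∧ g.fV (r.incL.fV k) = x.1 then
          r.R.p (r.incR.fV hk.choose)
        else G.p x.1
    | Sum.inr v => r.R.p v.1

/-- Direct derivation `G ⇒_r M`: there is an applicable match `g` such that `M`
is isomorphic to the result of applying `r` to `G` via `g`. -/
def Deriv (r : Rule LV LE) (G M : RGraph LV LE) : Prop :=
  ∃ (g : Morphism r.L G) (h : r.Applicable G g), Nonempty (Iso (r.result G g h) M)

end Rule

/-- `G ⇒_𝓡 H` for a set of rules. -/
def GTStep {LV LE : Type} (Rs : Set (Rule LV LE)) (G H : RGraph LV LE) : Prop :=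
  ∃ r ∈ Rs, r.Deriv G H

/-- `G ⇒*_𝓡 H`: the reflexive-transitive closure of `⇒_𝓡`, up to isomorphism. -/
def GTDerivStar {LV LE : Type} (Rs : Set (Rule LV LE)) (G H : RGraph LV LE) : Prop :=
  Relation.ReflTransGen (GTStep Rs) G H ∨ Nonempty (Iso G H)
/-! ## The tree-recognition system -/

/-- node labels: `□` (square) and `△` (triangle) -/
inductive NodeLab : Type where
  | square : NodeLab
  | tri : NodeLab
deriving DecidableEq

/-- `L` of rule `r0`: `v1 --□--> v2`, both `□`-labelled, `v1` unrooted, `v2` rooted. -/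
abbrev L0 : RGraph NodeLab Unit where
  V := Fin 2
  E := Unit
  finV := inferInstance
  finE := inferInstance
  s := fun _ => 0
  t := fun _ => 1
  l := fun _ => some .square
  m := fun _ => ()
  p := ![some false, some true]

/-- `K` of rules `r0` and `r1`: the single node `v1`, unlabelled, rootedness undefined. -/
abbrev K0 : RGraph NodeLab Unit where
  V := Unit
  E := PEmpty
  finV := inferInstance
  finE := inferInstance
  s := PEmpty.elim
  t := PEmpty.elim
  l := fun _ => none
  m := PEmpty.elim
  p := fun _ => none

/-- `R` of rules `r0` and `r1`: the single node `v1`, labelled `□`, rooted. -/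
abbrev R0 : RGraph NodeLab Unit where
  V := Unit
  E := PEmpty
  finV := inferInstance
  finE := inferInstance
  s := PEmpty.elim
  t := PEmpty.elim
  l := fun _ => some .square
  m := PEmpty.elim
  p := fun _ => some true

def incL0 : Morphism K0 L0 where
  fV := fun _ => 0
  fE := PEmpty.elim
  src := fun e => e.elim
  tgt := fun e => e.elim
  edgeLabel := fun e => e.elim
  nodeLabel := fun _ _ h => nomatch h
  rootedness := fun _ _ h => nomatch h

def incR0 : Morphism K0 R0 where
  fV := id
  fE := PEmpty.elim
  src := fun e => e.elim
  tgt := fun e => e.elim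
  edgeLabel := fun e => e.elim
  nodeLabel := fun _ _ h => nomatch h
  rootedness := fun _ _ h => nomatch h

/-- rule `r0`: prune a rooted `□`-leaf with unrooted `□`-parent, root moves to the parent -/
def r0 : Rule NodeLab Unit where
  L := L0
  K := K0
  R := R0
  incL := incL0
  incR := incR0
  injL := ⟨Function.injective_of_subsingleton _, Function.injective_of_subsingleton _⟩
  injR := ⟨Function.injective_of_subsingleton _, Function.injective_of_subsingleton _⟩

/-- `L` of rule `r1`: like `L0` but `v1` is labelled `△`. -/
abbrev L1 : RGraph NodeLab Unit where
  V := Fin 2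
  E := Unit
  finV := inferInstance
  finE := inferInstance
  s := fun _ => 0
  t := fun _ => 1
  l := ![some .tri, some .square]
  m := fun _ => ()
  p := ![some false, some true]

def incL1 : Morphism K0 L1 where
  fV := fun _ => 0
  fE := PEmpty.elim
  src := fun e => e.elim
  tgt := fun e => e.elim
  edgeLabel := fun e => e.elim
  nodeLabel := fun _ _ h => nomatch h
  rootedness := fun _ _ h => nomatch h

/-- rule `r1`: prune a rooted `□`-leaf with unrooted `△`-parent, root moves to the
parent which becomes `□`-labelled -/
def r1 : Rule NodeLab Unit where
  L := L1
  K := K0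
  R := R0
  incL := incL1
  incR := incR0
  injL := ⟨Function.injective_of_subsingleton _, Function.injective_of_subsingleton _⟩
  injR := ⟨Function.injective_of_subsingleton _, Function.injective_of_subsingleton _⟩

/-- `L` of rule `r2`: `v1 --□--> v2`, both `□`-labelled, `v1` rooted, `v2` unrooted. -/
abbrev L2 : RGraph NodeLab Unit where
  V := Fin 2
  E := Unit
  finV := inferInstance
  finE := inferInstance
  s := fun _ => 0
  t := fun _ => 1
  l := fun _ => some .square
  m := fun _ => ()
  p := ![some true, some false]

/-- `K` of rule `r2`: nodes `v1, v2`, unlabelled, rootedness undefined, no edges. -/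
abbrev K2 : RGraph NodeLab Unit where
  V := Fin 2
  E := PEmpty
  finV := inferInstance
  finE := inferInstance
  s := PEmpty.elim
  t := PEmpty.elim
  l := fun _ => none
  m := PEmpty.elim
  p := fun _ => none

/-- `R` of rule `r2`: `v1 --□--> v2`, `v1` labelled `△` and unrooted, `v2` labelled `□`
and rooted. -/
abbrev R2 : RGraph NodeLab Unit where
  V := Fin 2
  E := Unit
  finV := inferInstance
  finE := inferInstance
  s := fun _ => 0
  t := fun _ => 1
  l := ![some .tri, some .square]
  m := fun _ => ()
  p := ![some false, some true]

def incL2 : Morphism K2 L2 where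
  fV := id
  fE := PEmpty.elim
  src := fun e => e.elim
  tgt := fun e => e.elim
  edgeLabel := fun e => e.elim
  nodeLabel := fun _ _ h => nomatch h
  rootedness := fun _ _ h => nomatch h

def incR2 : Morphism K2 R2 where
  fV := id
  fE := PEmpty.elim
  src := fun e => e.elim
  tgt := fun e => e.elim
  edgeLabel := fun e => e.elim
  nodeLabel := fun _ _ h => nomatch h
  rootedness := fun _ _ h => nomatch h

/-- rule `r2`: push the root one step down an edge, marking the old position `△` -/
def r2 : Rule NodeLab Unit where
  L := L2
  K := K2
  R := R2
  incL := incL2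
  incR := incR2
  injL := ⟨Function.injective_id, Function.injective_of_subsingleton _⟩
  injR := ⟨Function.injective_id, Function.injective_of_subsingleton _⟩

/-- the rule set of the tree-recognition system -/
def TreeRules : Set (Rule NodeLab Unit) := {r0, r1, r2}

/-! ## Trees -/

/-- `IsUndirWalk G v l w`: `l` is an undirected walk from `v` to `w` in `G`;
each step is an edge together with a boolean telling in which direction it is
traversed. -/
def IsUndirWalk {LV LE : Type} (G : RGraph LV LE) : G.V → List (G.E × Bool) → G.V → Prop
  | v, [], w => v = w
  | v, (e, true) :: rest, w => G.s e = v ∧ IsUndirWalk G (G.t e) rest w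
  | v, (e, false) :: rest, w => G.t e = v ∧ IsUndirWalk G (G.s e) rest w

/-- connectedness via undirected walks -/
def IsConnectedGraph {LV LE : Type} (G : RGraph LV LE) : Prop :=
  ∀ v w : G.V, ∃ l, IsUndirWalk G v l w

/-- an undirected cycle: a non-empty closed undirected walk without repeated edges -/
def HasUndirCycle {LV LE : Type} (G : RGraph LV LE) : Prop :=
  ∃ (v : G.V) (l : List (G.E × Bool)), l ≠ [] ∧ IsUndirWalk G v l v ∧ (l.map Prod.fst).Nodup

/-- a tree: non-empty, connected, no undirected cycles, and every node has at
most one incoming edge -/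
def IsTree {LV LE : Type} (G : RGraph LV LE) : Prop :=
  Nonempty G.V ∧ IsConnectedGraph G ∧ ¬ HasUndirCycle G ∧
    ∀ v : G.V, Nat.card {e : G.E // G.t e = v} ≤ 1

/-- an input graph: a TLRG with exactly one root node, all nodes labelled `□`
(all edges are `□`-labelled since `Unit` is the edge alphabet) -/
def IsInputGraph (G : RGraph NodeLab Unit) : Prop :=
  G.IsTLRG ∧ (∀ v, G.l v = some .square) ∧ G.rootCount = 1

/-- no rule of `Rs` is applicable to `H` -/
def InNormalForm {LV LE : Type} (Rs : Set (Rule LV LE)) (H : RGraph LV LE) : Prop :=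
  ¬ ∃ r ∈ Rs, ∃ g : Morphism r.L H, r.Applicable H g


/-! ## Auxiliary machinery for the proof -/

section Machinery

variable {LV LE : Type}

/-- directed walk -/
def DW (G : RGraph LV LE) : G.V → List G.E → G.V → Prop
  | v, [], w => v = w
  | v, e :: r, w => G.s e = v ∧ DW G (G.t e) r w

lemma dw_append {G : RGraph LV LE} : ∀ {L1 : List G.E} {v u w : G.V} {L2 : List G.E},
    DW G v L1 u → DW G u L2 w → DW G v (L1 ++ L2) w
  | [], v, u, w, L2, h1, h2 => by cases h1; exact h2
  | e :: r, v, u, w, L2, h1, h2 => ⟨h1.1, dw_append h1.2 h2⟩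

lemma dw_append_inv {G : RGraph LV LE} : ∀ {L1 : List G.E} {v w : G.V} {L2 : List G.E},
    DW G v (L1 ++ L2) w → ∃ u, DW G v L1 u ∧ DW G u L2 w
  | [], v, w, L2, h => ⟨v, rfl, h⟩
  | e :: r, v, w, L2, h => by
      obtain ⟨u, h1, h2⟩ := dw_append_inv (L1 := r) h.2
      exact ⟨u, ⟨h.1, h1⟩, h2⟩

lemma dw_last {G : RGraph LV LE} : ∀ {L : List G.E} {v w : G.V},
    DW G v L w → L ≠ [] → ∃ e ∈ L, G.t e = w
  | [], v, w, _, hne => absurd rfl hne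
  | [e], v, w, h, _ => ⟨e, List.mem_singleton_self e, h.2⟩
  | e :: e' :: r, v, w, h, _ => by
      obtain ⟨f, hf, hfw⟩ := dw_last h.2 (by simp)
      exact ⟨f, List.mem_cons_of_mem _ hf, hfw⟩

lemma dw_splitP {G : RGraph LV LE} (P : G.E → Prop) : ∀ {L : List G.E} {v w : G.V},
    DW G v L w → (∃ e ∈ L, P e) →
    ∃ L1 e L2, L = L1 ++ e :: L2 ∧ P e ∧ (∀ e' ∈ L1, ¬ P e') ∧ DW G v L1 (G.s e)
  | [], v, w, _, hex => by simp at hex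
  | e :: r, v, w, h, hex => by
      by_cases hP : P e
      · exact ⟨[], e, r, rfl, hP, by simp, h.1.symm⟩
      · have hex' : ∃ e' ∈ r, P e' := by
          obtain ⟨f, hf, hPf⟩ := hex
          rcases List.mem_cons.mp hf with rfl | hf'
          · exact absurd hPf hP
          · exact ⟨f, hf', hPf⟩
        obtain ⟨L1, f, L2, rfl, hPf, hnP, hw⟩ := dw_splitP P h.2 hex'
        exact ⟨e :: L1, f, L2, rfl, hPf, by
          intro e' he'
          rcases List.mem_cons.mp he' with rfl | he''
          · exact hP
          · exact hnP e' he'', ⟨h.1, hw⟩⟩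

lemma not_nodup_split {α : Type*} : ∀ {L : List α}, ¬ L.Nodup →
    ∃ (a : α) (L1 L2 : List α), L = L1 ++ a :: L2 ∧ a ∈ L2
  | [], h => absurd List.nodup_nil h
  | x :: xs, h => by
      by_cases hx : x ∈ xs
      · exact ⟨x, [], xs, rfl, hx⟩
      · have : ¬ xs.Nodup := fun hn => h (List.nodup_cons.mpr ⟨hx, hn⟩)
        obtain ⟨a, L1, L2, rfl, ha⟩ := not_nodup_split this
        exact ⟨a, x :: L1, L2, rfl, ha⟩

lemma dw_single {G : RGraph LV LE} {e : G.E} {u : G.V} (h : G.s e = u) :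
    DW G u [e] (G.t e) := ⟨h, rfl⟩

lemma dw_to_undir {G : RGraph LV LE} : ∀ {L : List G.E} {v w : G.V},
    DW G v L w → IsUndirWalk G v (L.map (fun e => (e, true))) w
  | [], v, w, h => h
  | e :: r, v, w, h => ⟨h.1, dw_to_undir h.2⟩

lemma closed_dw_cycle_aux {G : RGraph LV LE} : ∀ (n : ℕ) {L : List G.E} {v : G.V},
    L.length ≤ n → DW G v L v → L ≠ [] → HasUndirCycle G := by
  intro n
  induction n with
  | zero => intro L v hlen _ hne; interval_cases h : L.length <;> simp_all [List.length_eq_zero_iff]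
  | succ n ih =>
    intro L v hlen hw hne
    by_cases hnd : L.Nodup
    · refine ⟨v, L.map (fun e => (e, true)), by simpa using hne, dw_to_undir hw, ?_⟩
      simpa [List.map_map, Function.comp_def] using hnd
    · obtain ⟨a, L1, L2, rfl, haL2⟩ := not_nodup_split hnd
      obtain ⟨u, h1, h2⟩ := dw_append_inv hw
      obtain ⟨M1, M2, rfl⟩ := List.append_of_mem haL2
      obtain ⟨u', h3, h4⟩ := dw_append_inv h2.2
      have hclosed : DW G (G.t a) (M1 ++ [a]) (G.t a) :=
        dw_append h3 (dw_single h4.1)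
      refine ih ?_ hclosed (by simp)
      have : (M1 ++ [a]).length ≤ (M1 ++ a :: M2).length := by simp
      have h5 : (L1 ++ a :: (M1 ++ a :: M2)).length ≤ n + 1 := hlen
      simp at h5 this ⊢
      omega

lemma closed_dw_cycle {G : RGraph LV LE} {L : List G.E} {v : G.V}
    (hw : DW G v L v) (hne : L ≠ []) : HasUndirCycle G :=
  closed_dw_cycle_aux L.length le_rfl hw hne

lemma eq_of_card_le_one {α : Type} [Finite α] (h : Nat.card α ≤ 1) (a b : α) : a = b := by
  by_contra hne
  have : Nontrivial α := ⟨a, b, hne⟩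
  have := Finite.one_lt_card_iff_nontrivial.mpr this
  omega

/-- structure-preserving maps carry directed walks -/
lemma dw_map {G H : RGraph LV LE} (fV : G.V → H.V) (fE : G.E → H.E)
    (hs : ∀ e, fV (G.s e) = H.s (fE e)) (ht : ∀ e, fV (G.t e) = H.t (fE e)) :
    ∀ {L : List G.E} {v w : G.V}, DW G v L w → DW H (fV v) (L.map fE) (fV w)
  | [], v, w, h => by cases h; rfl
  | e :: r, v, w, h => ⟨(hs e).symm.trans (congrArg fV h.1), by
      have := dw_map fV fE hs ht h.2
      rwa [ht e] at this⟩

/-- structure-preserving maps carry undirected walks -/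
lemma undir_map {G H : RGraph LV LE} (fV : G.V → H.V) (fE : G.E → H.E)
    (hs : ∀ e, fV (G.s e) = H.s (fE e)) (ht : ∀ e, fV (G.t e) = H.t (fE e)) :
    ∀ {L : List (G.E × Bool)} {v w : G.V}, IsUndirWalk G v L w →
      IsUndirWalk H (fV v) (L.map (fun q => (fE q.1, q.2))) (fV w)
  | [], v, w, h => congrArg fV h
  | (e, true) :: r, v, w, h => ⟨(hs e).symm.trans (congrArg fV h.1), by
      have := undir_map fV fE hs ht h.2
      rwa [ht e] at this⟩
  | (e, false) :: r, v, w, h => ⟨(ht e).symm.trans (congrArg fV h.1), by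
      have := undir_map fV fE hs ht h.2
      rwa [hs e] at this⟩

lemma cycle_map {G H : RGraph LV LE} (fV : G.V → H.V) (fE : G.E → H.E)
    (hs : ∀ e, fV (G.s e) = H.s (fE e)) (ht : ∀ e, fV (G.t e) = H.t (fE e))
    (hinj : Function.Injective fE) : HasUndirCycle G → HasUndirCycle H := by
  rintro ⟨v, L, hne, hw, hnd⟩
  refine ⟨fV v, L.map (fun q => (fE q.1, q.2)), by simpa using hne,
    undir_map fV fE hs ht hw, ?_⟩
  have : (L.map (fun q => (fE q.1, q.2))).map Prod.fst = (L.map Prod.fst).map fE := by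
    simp [List.map_map, Function.comp_def]
  rw [this]
  exact hnd.map hinj

/-- the invariant -/
def TRInv (H : RGraph NodeLab Unit) : Prop :=
  (∀ v, (H.l v).isSome) ∧ (∀ v, (H.p v).isSome) ∧
  (Nat.card {v : H.V // H.p v = some true} = 1) ∧
  (∀ v, H.p v = some true → H.l v = some .square) ∧
  (∀ v : H.V, Nat.card {e : H.E // H.t e = v} ≤ 1) ∧
  ¬ HasUndirCycle H ∧
  (∀ v, H.l v = some .tri →
    ∃ (L : List H.E) (w : H.V), DW H v L w ∧ H.p w = some true ∧
      ∀ e ∈ L, H.l (H.s e) = some .tri)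

lemma TRInv.uniq_root {H : RGraph NodeLab Unit} (hI : TRInv H) {v w : H.V}
    (hv : H.p v = some true) (hw : H.p w = some true) : v = w := by
  haveI := H.finV
  have := eq_of_card_le_one (α := {v : H.V // H.p v = some true})
    (le_of_eq hI.2.2.1) ⟨v, hv⟩ ⟨w, hw⟩
  exact congrArg Subtype.val this

lemma TRInv.uniq_in {H : RGraph NodeLab Unit} (hI : TRInv H) {v : H.V} {e f : H.E}
    (he : H.t e = v) (hf : H.t f = v) : e = f := by
  haveI := H.finE
  have := eq_of_card_le_one (α := {e : H.E // H.t e = v})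
    (hI.2.2.2.2.1 v) ⟨e, he⟩ ⟨f, hf⟩
  exact congrArg Subtype.val this

/-- the invariant implies the goal property -/
lemma TRInv.goal {H : RGraph NodeLab Unit} (hI : TRInv H) :
    ∀ v : H.V, H.p v = some true →
      ¬ ∃ e : H.E, H.s e = v ∧ H.l (H.t e) = some .tri := by
  rintro v hv ⟨e0, hs0, ht0⟩
  obtain ⟨L, w, hw, hwr, -⟩ := hI.2.2.2.2.2.2 _ ht0
  have hwv : w = v := hI.uniq_root hwr hv
  subst hwv
  have hclosed : DW H w (e0 :: L) w := ⟨hs0, hw⟩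
  exact hI.2.2.2.2.2.1 (closed_dw_cycle hclosed (by simp))

/-- the invariant is preserved by isomorphism -/
lemma TRInv.iso {G H : RGraph NodeLab Unit} (hI : TRInv G) (i : Iso G H) : TRInv H := by
  obtain ⟨h1, h2, h3, h4, h5, h6, h7⟩ := hI
  refine ⟨?_, ?_, ?_, ?_, ?_, ?_, ?_⟩
  · intro v
    obtain ⟨x, hx⟩ := Option.isSome_iff_exists.mp (h1 (i.invMor.fV v))
    have := i.toMor.nodeLabel _ _ hx
    rw [i.rightV] at this
    simp [this]
  · intro v
    obtain ⟨b, hb⟩ := Option.isSome_iff_exists.mp (h2 (i.invMor.fV v))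
    have := i.toMor.rootedness _ _ hb
    rw [i.rightV] at this
    simp [this]
  · haveI := G.finV
    rw [← h3]
    apply Nat.card_congr
    refine ⟨fun x => ⟨i.invMor.fV x.1, ?_⟩, fun x => ⟨i.toMor.fV x.1, i.toMor.rootedness _ _ x.2⟩,
      fun x => ?_, fun x => ?_⟩
    · obtain ⟨b, hb⟩ := Option.isSome_iff_exists.mp (h2 (i.invMor.fV x.1))
      have := i.toMor.rootedness _ _ hb
      rw [i.rightV, x.2] at this
      obtain rfl : true = b := by simpa using this
      exact hb
    · exact Subtype.ext (i.rightV _)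
    · exact Subtype.ext (i.leftV _)
  · intro v hv
    obtain ⟨b, hb⟩ := Option.isSome_iff_exists.mp (h2 (i.invMor.fV v))
    have hb' := i.toMor.rootedness _ _ hb
    rw [i.rightV, hv] at hb'
    have : b = true := by simpa using hb'.symm
    subst this
    have := i.toMor.nodeLabel _ _ (h4 _ hb)
    rwa [i.rightV] at this
  · intro v
    haveI := G.finE
    refine le_trans (Nat.card_le_card_of_injective
      (fun x => (⟨i.invMor.fE x.1, ?_⟩ : {e : G.E // G.t e = i.invMor.fV v})) ?_)
      (h5 (i.invMor.fV v))
    · rw [← i.invMor.tgt, x.2]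
    · intro x y hxy
      have := congrArg i.toMor.fE (congrArg Subtype.val hxy)
      simp only [i.rightE] at this
      exact Subtype.ext this
  · intro hc
    exact h6 (cycle_map i.invMor.fV i.invMor.fE i.invMor.src i.invMor.tgt
      (fun x y hxy => by rw [← i.rightE x, ← i.rightE y, hxy]) hc)
  · intro v hv
    obtain ⟨x, hx⟩ := Option.isSome_iff_exists.mp (h1 (i.invMor.fV v))
    have hx' := i.toMor.nodeLabel _ _ hx
    rw [i.rightV, hv] at hx'
    have : x = NodeLab.tri := by simpa using hx'.symm
    subst this
    obtain ⟨L, w, hw, hwr, hLl⟩ := h7 _ hx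
    refine ⟨L.map i.toMor.fE, i.toMor.fV w, ?_, i.toMor.rootedness _ _ hwr, ?_⟩
    · have := dw_map i.toMor.fV i.toMor.fE i.toMor.src i.toMor.tgt hw
      rwa [i.rightV] at this
    · intro e he
      obtain ⟨e', he', rfl⟩ := List.mem_map.mp he
      rw [← i.toMor.src]
      exact i.toMor.nodeLabel _ _ (hLl e' he')

/-- the invariant holds for input trees -/
lemma inv_init {G : RGraph NodeLab Unit} (hG : IsInputGraph G) (hT : IsTree G) : TRInv G := by
  obtain ⟨⟨hTL, hTR⟩, hsq, hrc⟩ := hG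
  refine ⟨hTL, hTR, hrc, fun v _ => hsq v, hT.2.2.2, hT.2.2.1, ?_⟩
  intro v hv
  rw [hsq v] at hv
  exact absurd (Option.some.injEq _ _ ▸ hv) (by simp)

end Machinery


/-! ## Preservation of the invariant by rule r0 -/

section Pres0

lemma fin2_cases : ∀ v : Fin 2, v ≠ 0 → v = 1 := by decide

lemma pres0 {H : RGraph NodeLab Unit} (hI : TRInv H) (g : Morphism r0.L H)
    (hg : r0.Applicable H g) : TRInv (r0.result H g hg) := by
  set M := r0.result H g hg with hM
  set a := g.fV (0 : Fin 2) with ha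
  set b := g.fV (1 : Fin 2) with hb
  set e₀ := g.fE () with he₀
  have hab : a ≠ b := fun h => absurd (hg.1.1 h) (show (0:Fin 2) ≠ 1 by decide)
  have hsa : H.s e₀ = a := (g.src ()).symm
  have hta : H.t e₀ = b := (g.tgt ()).symm
  have hpa : H.p a = some false := g.rootedness (0 : Fin 2) false (by decide)
  have hpb : H.p b = some true := g.rootedness (1 : Fin 2) true (by decide)
  have hlb : H.l b = some NodeLab.square := g.nodeLabel (1 : Fin 2) NodeLab.square (by decide)
  have hDelV : ∀ x : H.V, x ∈ r0.DelV H g ↔ x = b := by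
    intro x
    constructor
    · rintro ⟨v, hv, rfl⟩
      have hv0 : v ≠ (0 : Fin 2) := fun h => hv () h.symm
      rw [fin2_cases v hv0]
    · rintro rfl
      exact ⟨(1 : Fin 2), fun k => by cases k; exact (show (0:Fin 2) ≠ 1 by decide), rfl⟩
  have hDelE : ∀ x : H.E, x ∈ r0.DelE H g ↔ x = e₀ := by
    intro x
    constructor
    · rintro ⟨e, -, rfl⟩; rfl
    · rintro rfl; exact ⟨(), fun k => k.elim, rfl⟩
  have hVelim : ∀ v : M.V, ∃ x : {x : H.V // x ∉ r0.DelV H g}, v = Sum.inl x := by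
    rintro (x | ⟨u, hu⟩)
    · exact ⟨x, rfl⟩
    · exact absurd rfl (hu u)
  have hEelim : ∀ f : M.E, ∃ y : {x : H.E // x ∉ r0.DelE H g}, f = Sum.inl y := by
    rintro (y | ⟨y, hy⟩)
    · exact ⟨y, rfl⟩
    · exact y.elim
  have hanb : a ∉ r0.DelV H g := fun h => hab ((hDelV a).mp h)
  have hbd : b ∈ r0.DelV H g := (hDelV b).mpr rfl
  have he₀d : e₀ ∈ r0.DelE H g := (hDelE e₀).mpr rfl
  -- label/rootedness computations
  have hMla : ∀ x : {x : H.V // x ∉ r0.DelV H g}, x.1 = a →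
      M.l (Sum.inl x) = some NodeLab.square ∧ M.p (Sum.inl x) = some true := by
    intro x hx
    constructor
    · show (r0.result H g hg).l (Sum.inl x) = _
      simp only [Rule.result]
      split
      · rfl
      · next hno => exact absurd ⟨(), rfl, hx.symm⟩ hno
    · show (r0.result H g hg).p (Sum.inl x) = _
      simp only [Rule.result]
      split
      · rfl
      · next hno => exact absurd ⟨(), rfl, hx.symm⟩ hno
  have hMlx : ∀ x : {x : H.V // x ∉ r0.DelV H g}, x.1 ≠ a →
      M.l (Sum.inl x) = H.l x.1 ∧ M.p (Sum.inl x) = H.p x.1 := by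
    intro x hx
    constructor
    · show (r0.result H g hg).l (Sum.inl x) = _
      simp only [Rule.result]
      split
      · next hc => exact absurd hc.choose_spec.2 (fun h => hx h.symm)
      · rfl
    · show (r0.result H g hg).p (Sum.inl x) = _
      simp only [Rule.result]
      split
      · next hc => exact absurd hc.choose_spec.2 (fun h => hx h.symm)
      · rfl
  have hcongr : ∀ (x y : {x : H.V // x ∉ r0.DelV H g}), x.1 = y.1 →
      (Sum.inl x : M.V) = Sum.inl y := fun x y h => congrArg Sum.inl (Subtype.ext h)
  obtain ⟨h1, h2, h3, h4, h5, h6, h7⟩ := id hI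
  refine ⟨?_, ?_, ?_, ?_, ?_, ?_, ?_⟩
  · intro v
    obtain ⟨x, rfl⟩ := hVelim v
    by_cases hx : x.1 = a
    · rw [(hMla x hx).1]; rfl
    · rw [(hMlx x hx).1]; exact h1 x.1
  · intro v
    obtain ⟨x, rfl⟩ := hVelim v
    by_cases hx : x.1 = a
    · rw [(hMla x hx).2]; rfl
    · rw [(hMlx x hx).2]; exact h2 x.1
  · haveI := M.finV
    rw [Nat.card_eq_one_iff_unique]
    have key : ∀ z : {v : M.V // M.p v = some true}, z.1 = Sum.inl ⟨a, hanb⟩ := by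
      rintro ⟨u, hu⟩
      obtain ⟨x, rfl⟩ := hVelim u
      by_cases hx : x.1 = a
      · exact hcongr _ _ hx
      · rw [(hMlx x hx).2] at hu
        exact absurd ((hDelV x.1).mpr (hI.uniq_root hu hpb)) x.2
    refine ⟨⟨fun z w => Subtype.ext ((key z).trans (key w).symm)⟩,
      ⟨⟨Sum.inl ⟨a, hanb⟩, (hMla ⟨a, hanb⟩ rfl).2⟩⟩⟩
  · intro v hv
    obtain ⟨x, rfl⟩ := hVelim v
    by_cases hx : x.1 = a
    · exact (hMla x hx).1
    · rw [(hMlx x hx).2] at hv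
      exact absurd ((hDelV x.1).mpr (hI.uniq_root hv hpb)) x.2
  · intro v
    obtain ⟨x, rfl⟩ := hVelim v
    haveI := H.finE
    refine le_trans (Nat.card_le_card_of_injective
      (fun f => (⟨(hEelim f.1).choose.1, ?_⟩ : {e : H.E // H.t e = x.1})) ?_) (h5 x.1)
    · have hsp := (hEelim f.1).choose_spec
      have hft := f.2
      rw [hsp] at hft
      exact congrArg Subtype.val (Sum.inl.inj hft)
    · intro f f' hff
      have hsp := (hEelim f.1).choose_spec
      have hsp' := (hEelim f'.1).choose_spec
      have hvv := congrArg Subtype.val hff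
      have hcc : (hEelim f.1).choose = (hEelim f'.1).choose := Subtype.ext (by exact hvv)
      exact Subtype.ext (hsp.trans (by rw [hcc, ← hsp']))
  · intro hc
    refine h6 (cycle_map (Sum.elim Subtype.val (fun y => (y.2 y.1 rfl).elim))
      (Sum.elim Subtype.val (fun y => y.1.elim)) ?_ ?_ ?_ hc)
    · rintro (y | y)
      · rfl
      · exact y.1.elim
    · rintro (y | y)
      · rfl
      · exact y.1.elim
    · intro f f' hff
      obtain ⟨y, rfl⟩ := hEelim f
      obtain ⟨y', rfl⟩ := hEelim f'
      exact congrArg Sum.inl (Subtype.ext hff)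
  · intro v hv
    obtain ⟨x, rfl⟩ := hVelim v
    by_cases hx : x.1 = a
    · rw [(hMla x hx).1] at hv
      simp at hv
    · rw [(hMlx x hx).1] at hv
      obtain ⟨L, w, hw, hwr, hLl⟩ := h7 x.1 hv
      have hwb : w = b := hI.uniq_root hwr hpb
      subst hwb
      have hLne : L ≠ [] := by
        rintro rfl
        exact x.2 ((hDelV x.1).mpr hw)
      obtain ⟨el, hel, helb⟩ := dw_last hw hLne
      have hexa : ∃ e ∈ L, H.s e = a := ⟨el, hel, by rw [hI.uniq_in helb hta, hsa]⟩
      obtain ⟨L1, estar, L2, hsplit, hPe, hnP, hw1⟩ := dw_splitP (fun e => H.s e = a) hw hexa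
      rw [hPe] at hw1
      have hcond : ∀ e ∈ L1, e ∉ r0.DelE H g ∧ H.t e ≠ b ∧ H.s e ≠ a ∧
          H.l (H.s e) = some NodeLab.tri := by
        intro e he
        have heL : e ∈ L := by rw [hsplit]; exact List.mem_append_left _ he
        have hsne : H.s e ≠ a := hnP e he
        refine ⟨?_, ?_, hsne, hLl e heL⟩
        · intro hd
          exact hsne (by rw [(hDelE e).mp hd, hsa])
        · intro htb
          exact hsne (by rw [hI.uniq_in htb hta, hsa])
      have lift : ∀ (L' : List H.E) (v : H.V) (hvd : v ∉ r0.DelV H g),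
          DW H v L' a →
          (∀ e ∈ L', e ∉ r0.DelE H g ∧ H.t e ≠ b ∧ H.s e ≠ a ∧
            H.l (H.s e) = some NodeLab.tri) →
          ∃ LM, DW M (Sum.inl ⟨v, hvd⟩) LM (Sum.inl ⟨a, hanb⟩) ∧
            ∀ f ∈ LM, M.l (M.s f) = some NodeLab.tri := by
        intro L'
        induction L' with
        | nil =>
          intro v hvd hwk _
          exact ⟨[], hcongr _ _ hwk, by simp⟩
        | cons e L'' ih =>
          intro v hvd hwk hcd
          obtain ⟨hce, hct, hcs, hcl⟩ := hcd e List.mem_cons_self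
          have hvd' : H.t e ∉ r0.DelV H g := fun h => hct ((hDelV _).mp h)
          obtain ⟨LM, hLM, hLMl⟩ :=
            ih (H.t e) hvd' hwk.2 (fun f hf => hcd f (List.mem_cons_of_mem _ hf))
          refine ⟨Sum.inl ⟨e, hce⟩ :: LM, ⟨hcongr _ _ hwk.1, hLM⟩, ?_⟩
          intro f hf
          rcases List.mem_cons.mp hf with rfl | hf'
          · have hsb : H.s e ≠ b := by
              intro h
              rw [h, hlb] at hcl
              simp at hcl
            have hnd : H.s e ∉ r0.DelV H g := fun h => hsb ((hDelV _).mp h)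
            show M.l (Sum.inl ⟨H.s e, hnd⟩) = _
            rw [(hMlx ⟨H.s e, hnd⟩ hcs).1]
            exact hcl
          · exact hLMl f hf'
      obtain ⟨LM, hLM, hLMl⟩ := lift L1 x.1 x.2 hw1 hcond
      exact ⟨LM, Sum.inl ⟨a, hanb⟩, hLM, (hMla ⟨a, hanb⟩ rfl).2, hLMl⟩

lemma pres1 {H : RGraph NodeLab Unit} (hI : TRInv H) (g : Morphism r1.L H)
    (hg : r1.Applicable H g) : TRInv (r1.result H g hg) := by
  set M := r1.result H g hg with hM
  set a := g.fV (0 : Fin 2) with ha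
  set b := g.fV (1 : Fin 2) with hb
  set e₀ := g.fE () with he₀
  have hab : a ≠ b := fun h => absurd (hg.1.1 h) (show (0:Fin 2) ≠ 1 by decide)
  have hsa : H.s e₀ = a := (g.src ()).symm
  have hta : H.t e₀ = b := (g.tgt ()).symm
  have hpa : H.p a = some false := g.rootedness (0 : Fin 2) false (by decide)
  have hpb : H.p b = some true := g.rootedness (1 : Fin 2) true (by decide)
  have hlb : H.l b = some NodeLab.square := g.nodeLabel (1 : Fin 2) NodeLab.square (by decide)
  have hDelV : ∀ x : H.V, x ∈ r1.DelV H g ↔ x = b := by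
    intro x
    constructor
    · rintro ⟨v, hv, rfl⟩
      have hv0 : v ≠ (0 : Fin 2) := fun h => hv () h.symm
      rw [fin2_cases v hv0]
    · rintro rfl
      exact ⟨(1 : Fin 2), fun k => by cases k; exact (show (0:Fin 2) ≠ 1 by decide), rfl⟩
  have hDelE : ∀ x : H.E, x ∈ r1.DelE H g ↔ x = e₀ := by
    intro x
    constructor
    · rintro ⟨e, -, rfl⟩; rfl
    · rintro rfl; exact ⟨(), fun k => k.elim, rfl⟩
  have hVelim : ∀ v : M.V, ∃ x : {x : H.V // x ∉ r1.DelV H g}, v = Sum.inl x := by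
    rintro (x | ⟨u, hu⟩)
    · exact ⟨x, rfl⟩
    · exact absurd rfl (hu u)
  have hEelim : ∀ f : M.E, ∃ y : {x : H.E // x ∉ r1.DelE H g}, f = Sum.inl y := by
    rintro (y | ⟨y, hy⟩)
    · exact ⟨y, rfl⟩
    · exact y.elim
  have hanb : a ∉ r1.DelV H g := fun h => hab ((hDelV a).mp h)
  have hbd : b ∈ r1.DelV H g := (hDelV b).mpr rfl
  have he₀d : e₀ ∈ r1.DelE H g := (hDelE e₀).mpr rfl
  -- label/rootedness computations
  have hMla : ∀ x : {x : H.V // x ∉ r1.DelV H g}, x.1 = a →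
      M.l (Sum.inl x) = some NodeLab.square ∧ M.p (Sum.inl x) = some true := by
    intro x hx
    constructor
    · show (r1.result H g hg).l (Sum.inl x) = _
      simp only [Rule.result]
      split
      · rfl
      · next hno => exact absurd ⟨(), rfl, hx.symm⟩ hno
    · show (r1.result H g hg).p (Sum.inl x) = _
      simp only [Rule.result]
      split
      · rfl
      · next hno => exact absurd ⟨(), rfl, hx.symm⟩ hno
  have hMlx : ∀ x : {x : H.V // x ∉ r1.DelV H g}, x.1 ≠ a →
      M.l (Sum.inl x) = H.l x.1 ∧ M.p (Sum.inl x) = H.p x.1 := by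
    intro x hx
    constructor
    · show (r1.result H g hg).l (Sum.inl x) = _
      simp only [Rule.result]
      split
      · next hc => exact absurd hc.choose_spec.2 (fun h => hx h.symm)
      · rfl
    · show (r1.result H g hg).p (Sum.inl x) = _
      simp only [Rule.result]
      split
      · next hc => exact absurd hc.choose_spec.2 (fun h => hx h.symm)
      · rfl
  have hcongr : ∀ (x y : {x : H.V // x ∉ r1.DelV H g}), x.1 = y.1 →
      (Sum.inl x : M.V) = Sum.inl y := fun x y h => congrArg Sum.inl (Subtype.ext h)
  obtain ⟨h1, h2, h3, h4, h5, h6, h7⟩ := id hI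
  refine ⟨?_, ?_, ?_, ?_, ?_, ?_, ?_⟩
  · intro v
    obtain ⟨x, rfl⟩ := hVelim v
    by_cases hx : x.1 = a
    · rw [(hMla x hx).1]; rfl
    · rw [(hMlx x hx).1]; exact h1 x.1
  · intro v
    obtain ⟨x, rfl⟩ := hVelim v
    by_cases hx : x.1 = a
    · rw [(hMla x hx).2]; rfl
    · rw [(hMlx x hx).2]; exact h2 x.1
  · haveI := M.finV
    rw [Nat.card_eq_one_iff_unique]
    have key : ∀ z : {v : M.V // M.p v = some true}, z.1 = Sum.inl ⟨a, hanb⟩ := by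
      rintro ⟨u, hu⟩
      obtain ⟨x, rfl⟩ := hVelim u
      by_cases hx : x.1 = a
      · exact hcongr _ _ hx
      · rw [(hMlx x hx).2] at hu
        exact absurd ((hDelV x.1).mpr (hI.uniq_root hu hpb)) x.2
    refine ⟨⟨fun z w => Subtype.ext ((key z).trans (key w).symm)⟩,
      ⟨⟨Sum.inl ⟨a, hanb⟩, (hMla ⟨a, hanb⟩ rfl).2⟩⟩⟩
  · intro v hv
    obtain ⟨x, rfl⟩ := hVelim v
    by_cases hx : x.1 = a
    · exact (hMla x hx).1
    · rw [(hMlx x hx).2] at hv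
      exact absurd ((hDelV x.1).mpr (hI.uniq_root hv hpb)) x.2
  · intro v
    obtain ⟨x, rfl⟩ := hVelim v
    haveI := H.finE
    refine le_trans (Nat.card_le_card_of_injective
      (fun f => (⟨(hEelim f.1).choose.1, ?_⟩ : {e : H.E // H.t e = x.1})) ?_) (h5 x.1)
    · have hsp := (hEelim f.1).choose_spec
      have hft := f.2
      rw [hsp] at hft
      exact congrArg Subtype.val (Sum.inl.inj hft)
    · intro f f' hff
      have hsp := (hEelim f.1).choose_spec
      have hsp' := (hEelim f'.1).choose_spec
      have hvv := congrArg Subtype.val hff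
      have hcc : (hEelim f.1).choose = (hEelim f'.1).choose := Subtype.ext (by exact hvv)
      exact Subtype.ext (hsp.trans (by rw [hcc, ← hsp']))
  · intro hc
    refine h6 (cycle_map (Sum.elim Subtype.val (fun y => (y.2 y.1 rfl).elim))
      (Sum.elim Subtype.val (fun y => y.1.elim)) ?_ ?_ ?_ hc)
    · rintro (y | y)
      · rfl
      · exact y.1.elim
    · rintro (y | y)
      · rfl
      · exact y.1.elim
    · intro f f' hff
      obtain ⟨y, rfl⟩ := hEelim f
      obtain ⟨y', rfl⟩ := hEelim f'
      exact congrArg Sum.inl (Subtype.ext hff)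
  · intro v hv
    obtain ⟨x, rfl⟩ := hVelim v
    by_cases hx : x.1 = a
    · rw [(hMla x hx).1] at hv
      simp at hv
    · rw [(hMlx x hx).1] at hv
      obtain ⟨L, w, hw, hwr, hLl⟩ := h7 x.1 hv
      have hwb : w = b := hI.uniq_root hwr hpb
      subst hwb
      have hLne : L ≠ [] := by
        rintro rfl
        exact x.2 ((hDelV x.1).mpr hw)
      obtain ⟨el, hel, helb⟩ := dw_last hw hLne
      have hexa : ∃ e ∈ L, H.s e = a := ⟨el, hel, by rw [hI.uniq_in helb hta, hsa]⟩
      obtain ⟨L1, estar, L2, hsplit, hPe, hnP, hw1⟩ := dw_splitP (fun e => H.s e = a) hw hexa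
      rw [hPe] at hw1
      have hcond : ∀ e ∈ L1, e ∉ r1.DelE H g ∧ H.t e ≠ b ∧ H.s e ≠ a ∧
          H.l (H.s e) = some NodeLab.tri := by
        intro e he
        have heL : e ∈ L := by rw [hsplit]; exact List.mem_append_left _ he
        have hsne : H.s e ≠ a := hnP e he
        refine ⟨?_, ?_, hsne, hLl e heL⟩
        · intro hd
          exact hsne (by rw [(hDelE e).mp hd, hsa])
        · intro htb
          exact hsne (by rw [hI.uniq_in htb hta, hsa])
      have lift : ∀ (L' : List H.E) (v : H.V) (hvd : v ∉ r1.DelV H g),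
          DW H v L' a →
          (∀ e ∈ L', e ∉ r1.DelE H g ∧ H.t e ≠ b ∧ H.s e ≠ a ∧
            H.l (H.s e) = some NodeLab.tri) →
          ∃ LM, DW M (Sum.inl ⟨v, hvd⟩) LM (Sum.inl ⟨a, hanb⟩) ∧
            ∀ f ∈ LM, M.l (M.s f) = some NodeLab.tri := by
        intro L'
        induction L' with
        | nil =>
          intro v hvd hwk _
          exact ⟨[], hcongr _ _ hwk, by simp⟩
        | cons e L'' ih =>
          intro v hvd hwk hcd
          obtain ⟨hce, hct, hcs, hcl⟩ := hcd e List.mem_cons_self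
          have hvd' : H.t e ∉ r1.DelV H g := fun h => hct ((hDelV _).mp h)
          obtain ⟨LM, hLM, hLMl⟩ :=
            ih (H.t e) hvd' hwk.2 (fun f hf => hcd f (List.mem_cons_of_mem _ hf))
          refine ⟨Sum.inl ⟨e, hce⟩ :: LM, ⟨hcongr _ _ hwk.1, hLM⟩, ?_⟩
          intro f hf
          rcases List.mem_cons.mp hf with rfl | hf'
          · have hsb : H.s e ≠ b := by
              intro h
              rw [h, hlb] at hcl
              simp at hcl
            have hnd : H.s e ∉ r1.DelV H g := fun h => hsb ((hDelV _).mp h)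
            show M.l (Sum.inl ⟨H.s e, hnd⟩) = _
            rw [(hMlx ⟨H.s e, hnd⟩ hcs).1]
            exact hcl
          · exact hLMl f hf'
      obtain ⟨LM, hLM, hLMl⟩ := lift L1 x.1 x.2 hw1 hcond
      exact ⟨LM, Sum.inl ⟨a, hanb⟩, hLM, (hMla ⟨a, hanb⟩ rfl).2, hLMl⟩

end Pres0

section Pres2

lemma pres2 {H : RGraph NodeLab Unit} (hI : TRInv H) (g : Morphism r2.L H)
    (hg : r2.Applicable H g) : TRInv (r2.result H g hg) := by
  set M := r2.result H g hg with hM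
  set a := g.fV (0 : Fin 2) with ha
  set b := g.fV (1 : Fin 2) with hb
  set e₀ := g.fE () with he₀
  have hab : a ≠ b := fun h => absurd (hg.1.1 h) (show (0:Fin 2) ≠ 1 by decide)
  have hsa : H.s e₀ = a := (g.src ()).symm
  have hta : H.t e₀ = b := (g.tgt ()).symm
  have hpa : H.p a = some true := g.rootedness (0 : Fin 2) true (by decide)
  have hpb : H.p b = some false := g.rootedness (1 : Fin 2) false (by decide)
  have hla : H.l a = some NodeLab.square := g.nodeLabel (0 : Fin 2) NodeLab.square (by decide)
  have hlb : H.l b = some NodeLab.square := g.nodeLabel (1 : Fin 2) NodeLab.square (by decide)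
  have hDelV : ∀ x : H.V, x ∉ r2.DelV H g := by
    rintro x ⟨v, hv, rfl⟩
    exact hv v rfl
  have hDelE : ∀ x : H.E, x ∈ r2.DelE H g ↔ x = e₀ := by
    intro x
    constructor
    · rintro ⟨e, -, rfl⟩; rfl
    · rintro rfl; exact ⟨(), fun k => k.elim, rfl⟩
  have he₀d : e₀ ∈ r2.DelE H g := (hDelE e₀).mpr rfl
  have hVelim : ∀ v : M.V, ∃ x : {x : H.V // x ∉ r2.DelV H g}, v = Sum.inl x := by
    rintro (x | ⟨u, hu⟩)
    · exact ⟨x, rfl⟩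
    · exact absurd rfl (hu u)
  set eh : M.E := Sum.inr ⟨(), fun k => k.elim⟩ with heh
  have hEelim : ∀ f : M.E, (∃ y : {x : H.E // x ∉ r2.DelE H g}, f = Sum.inl y) ∨ f = eh := by
    rintro (y | z)
    · exact Or.inl ⟨y, rfl⟩
    · exact Or.inr (congrArg Sum.inr (Subtype.ext rfl))
  have hcongr : ∀ (x y : {x : H.V // x ∉ r2.DelV H g}), x.1 = y.1 →
      (Sum.inl x : M.V) = Sum.inl y := fun x y h => congrArg Sum.inl (Subtype.ext h)
  -- source/target of the new edge
  have hse : M.s eh = Sum.inl ⟨a, hDelV a⟩ := by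
    show (r2.result H g hg).s eh = _
    simp only [Rule.result, heh]
    split
    · next hc =>
        have h0 : r2.incL.fV hc.choose = (0 : Fin 2) := hc.choose_spec
        exact congrArg Sum.inl (Subtype.ext (congrArg g.fV h0))
    · next hno => exact absurd ⟨(0 : Fin 2), rfl⟩ hno
  have hte : M.t eh = Sum.inl ⟨b, hDelV b⟩ := by
    show (r2.result H g hg).t eh = _
    simp only [Rule.result, heh]
    split
    · next hc =>
        have h0 : r2.incL.fV hc.choose = (1 : Fin 2) := hc.choose_spec
        exact congrArg Sum.inl (Subtype.ext (congrArg g.fV h0))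
    · next hno => exact absurd ⟨(1 : Fin 2), rfl⟩ hno
  -- label/rootedness computations
  have hMa : ∀ x : {x : H.V // x ∉ r2.DelV H g}, x.1 = a →
      M.l (Sum.inl x) = some NodeLab.tri ∧ M.p (Sum.inl x) = some false := by
    intro x hx
    have harg : ∀ hc : ∃ k : r2.K.V, r2.K.l k = none ∧ g.fV (r2.incL.fV k) = x.1,
        hc.choose = (0 : Fin 2) := by
      intro hc
      exact hg.1.1 (hc.choose_spec.2.trans (hx.trans ha))
    have hargp : ∀ hc : ∃ k : r2.K.V, r2.K.p k = none ∧ g.fV (r2.incL.fV k) = x.1,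
        hc.choose = (0 : Fin 2) := by
      intro hc
      exact hg.1.1 (hc.choose_spec.2.trans (hx.trans ha))
    constructor
    · show (r2.result H g hg).l (Sum.inl x) = _
      simp only [Rule.result]
      split
      · next hc => rw [harg hc]; rfl
      · next hno => exact absurd ⟨(0 : Fin 2), rfl, (hx.trans ha).symm⟩ hno
    · show (r2.result H g hg).p (Sum.inl x) = _
      simp only [Rule.result]
      split
      · next hc => rw [hargp hc]; rfl
      · next hno => exact absurd ⟨(0 : Fin 2), rfl, (hx.trans ha).symm⟩ hno
  have hMb : ∀ x : {x : H.V // x ∉ r2.DelV H g}, x.1 = b →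
      M.l (Sum.inl x) = some NodeLab.square ∧ M.p (Sum.inl x) = some true := by
    intro x hx
    have harg : ∀ hc : ∃ k : r2.K.V, r2.K.l k = none ∧ g.fV (r2.incL.fV k) = x.1,
        hc.choose = (1 : Fin 2) := by
      intro hc
      exact hg.1.1 (hc.choose_spec.2.trans (hx.trans hb))
    have hargp : ∀ hc : ∃ k : r2.K.V, r2.K.p k = none ∧ g.fV (r2.incL.fV k) = x.1,
        hc.choose = (1 : Fin 2) := by
      intro hc
      exact hg.1.1 (hc.choose_spec.2.trans (hx.trans hb))
    constructor
    · show (r2.result H g hg).l (Sum.inl x) = _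
      simp only [Rule.result]
      split
      · next hc => rw [harg hc]; rfl
      · next hno => exact absurd ⟨(1 : Fin 2), rfl, (hx.trans hb).symm⟩ hno
    · show (r2.result H g hg).p (Sum.inl x) = _
      simp only [Rule.result]
      split
      · next hc => rw [hargp hc]; rfl
      · next hno => exact absurd ⟨(1 : Fin 2), rfl, (hx.trans hb).symm⟩ hno
  have hMx : ∀ x : {x : H.V // x ∉ r2.DelV H g}, x.1 ≠ a → x.1 ≠ b →
      M.l (Sum.inl x) = H.l x.1 ∧ M.p (Sum.inl x) = H.p x.1 := by
    intro x hxa hxb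
    have harg : ¬ ∃ k : r2.K.V, r2.K.l k = none ∧ g.fV (r2.incL.fV k) = x.1 := by
      rintro ⟨k, -, hk⟩
      by_cases h0 : r2.incL.fV k = (0 : Fin 2)
      · rw [h0] at hk; exact hxa (hk.symm.trans ha.symm)
      · have h1 : r2.incL.fV k = (1 : Fin 2) := fin2_cases _ h0
        rw [h1] at hk; exact hxb (hk.symm.trans hb.symm)
    have hargp : ¬ ∃ k : r2.K.V, r2.K.p k = none ∧ g.fV (r2.incL.fV k) = x.1 := by
      rintro ⟨k, -, hk⟩
      by_cases h0 : r2.incL.fV k = (0 : Fin 2)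
      · rw [h0] at hk; exact hxa (hk.symm.trans ha.symm)
      · have h1 : r2.incL.fV k = (1 : Fin 2) := fin2_cases _ h0
        rw [h1] at hk; exact hxb (hk.symm.trans hb.symm)
    constructor
    · show (r2.result H g hg).l (Sum.inl x) = _
      simp only [Rule.result]
      split
      · next hc => exact absurd hc harg
      · rfl
    · show (r2.result H g hg).p (Sum.inl x) = _
      simp only [Rule.result]
      split
      · next hc => exact absurd hc hargp
      · rfl
  obtain ⟨h1, h2, h3, h4, h5, h6, h7⟩ := id hI
  refine ⟨?_, ?_, ?_, ?_, ?_, ?_, ?_⟩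
  · intro v
    obtain ⟨x, rfl⟩ := hVelim v
    by_cases hxa : x.1 = a
    · rw [(hMa x hxa).1]; rfl
    · by_cases hxb : x.1 = b
      · rw [(hMb x hxb).1]; rfl
      · rw [(hMx x hxa hxb).1]; exact h1 x.1
  · intro v
    obtain ⟨x, rfl⟩ := hVelim v
    by_cases hxa : x.1 = a
    · rw [(hMa x hxa).2]; rfl
    · by_cases hxb : x.1 = b
      · rw [(hMb x hxb).2]; rfl
      · rw [(hMx x hxa hxb).2]; exact h2 x.1
  · haveI := M.finV
    rw [Nat.card_eq_one_iff_unique]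
    have key : ∀ z : {v : M.V // M.p v = some true}, z.1 = Sum.inl ⟨b, hDelV b⟩ := by
      rintro ⟨u, hu⟩
      obtain ⟨x, rfl⟩ := hVelim u
      by_cases hxa : x.1 = a
      · rw [(hMa x hxa).2] at hu; simp at hu
      · by_cases hxb : x.1 = b
        · exact hcongr _ _ hxb
        · rw [(hMx x hxa hxb).2] at hu
          exact absurd (hI.uniq_root hu hpa) hxa
    refine ⟨⟨fun z w => Subtype.ext ((key z).trans (key w).symm)⟩,
      ⟨⟨Sum.inl ⟨b, hDelV b⟩, (hMb ⟨b, hDelV b⟩ rfl).2⟩⟩⟩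
  · intro v hv
    obtain ⟨x, rfl⟩ := hVelim v
    by_cases hxa : x.1 = a
    · rw [(hMa x hxa).2] at hv; simp at hv
    · by_cases hxb : x.1 = b
      · exact (hMb x hxb).1
      · rw [(hMx x hxa hxb).2] at hv
        exact absurd (hI.uniq_root hv hpa) hxa
  · intro v
    obtain ⟨x, rfl⟩ := hVelim v
    haveI := H.finE
    classical
    refine le_trans (Nat.card_le_card_of_injective
      (fun f => (⟨if h : ∃ y : {x : H.E // x ∉ r2.DelE H g}, f.1 = Sum.inl y
                  then h.choose.1 else e₀, ?_⟩ : {e : H.E // H.t e = x.1})) ?_) (h5 x.1)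
    · by_cases h : ∃ y : {x : H.E // x ∉ r2.DelE H g}, f.1 = Sum.inl y
      · rw [dif_pos h]
        have hsp := h.choose_spec
        have hft := f.2
        rw [hsp] at hft
        exact congrArg Subtype.val (Sum.inl.inj hft)
      · rw [dif_neg h]
        rcases hEelim f.1 with ⟨y, hy⟩ | hy
        · exact absurd ⟨y, hy⟩ h
        · have hft := f.2
          rw [hy, hte] at hft
          rw [hta]
          exact congrArg Subtype.val (Sum.inl.inj hft)
    · intro f f' hff
      have hvv2 : (if h : ∃ y0 : {x : H.E // x ∉ r2.DelE H g}, f.1 = Sum.inl y0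
            then h.choose.1 else e₀)
          = (if h : ∃ y0 : {x : H.E // x ∉ r2.DelE H g}, f'.1 = Sum.inl y0
            then h.choose.1 else e₀) := by exact congrArg Subtype.val hff
      have hinr : ∀ (z : M.E), z = eh → ¬ ∃ y0 : {x : H.E // x ∉ r2.DelE H g},
          z = Sum.inl y0 := by
        rintro z rfl ⟨y0, h0⟩
        simp [heh] at h0
      rcases hEelim f.1 with ⟨y, hy⟩ | hy <;> rcases hEelim f'.1 with ⟨y', hy'⟩ | hy'
      · have hp : ∃ y0 : {x : H.E // x ∉ r2.DelE H g}, f.1 = Sum.inl y0 := ⟨y, hy⟩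
        have hp' : ∃ y0 : {x : H.E // x ∉ r2.DelE H g}, f'.1 = Sum.inl y0 := ⟨y', hy'⟩
        rw [dif_pos hp, dif_pos hp'] at hvv2
        exact Subtype.ext (hp.choose_spec.trans
          (by rw [Subtype.ext hvv2, ← hp'.choose_spec]))
      · have hp : ∃ y0 : {x : H.E // x ∉ r2.DelE H g}, f.1 = Sum.inl y0 := ⟨y, hy⟩
        rw [dif_pos hp, dif_neg (hinr _ hy')] at hvv2
        exact absurd ((hDelE _).mpr hvv2) hp.choose.2
      · have hp' : ∃ y0 : {x : H.E // x ∉ r2.DelE H g}, f'.1 = Sum.inl y0 := ⟨y', hy'⟩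
        rw [dif_neg (hinr _ hy), dif_pos hp'] at hvv2
        exact absurd ((hDelE _).mpr hvv2.symm) hp'.choose.2
      · exact Subtype.ext (hy.trans hy'.symm)
  · intro hc
    refine h6 (cycle_map (Sum.elim Subtype.val (fun y => (y.2 y.1 rfl).elim))
      (Sum.elim Subtype.val (fun _ => e₀)) ?_ ?_ ?_ hc)
    · intro f
      rcases hEelim f with ⟨y, rfl⟩ | rfl
      · rfl
      · rw [hse]; exact hsa.symm
    · intro f
      rcases hEelim f with ⟨y, rfl⟩ | rfl
      · rfl
      · rw [hte]; exact hta.symm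
    · intro f f' hff
      rcases hEelim f with ⟨y, rfl⟩ | rfl <;> rcases hEelim f' with ⟨y', rfl⟩ | rfl
      · exact congrArg Sum.inl (Subtype.ext hff)
      · exact absurd ((hDelE _).mpr hff) y.2
      · exact absurd ((hDelE _).mpr hff.symm) y'.2
      · rfl
  · intro v hv
    obtain ⟨x, rfl⟩ := hVelim v
    have hwalk_eh : DW M (Sum.inl ⟨a, hDelV a⟩) [eh] (Sum.inl ⟨b, hDelV b⟩) := ⟨hse, hte⟩
    by_cases hxa : x.1 = a
    · refine ⟨[eh], Sum.inl ⟨b, hDelV b⟩, ⟨hse.trans (hcongr _ _ hxa.symm), hte⟩,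
        (hMb ⟨b, hDelV b⟩ rfl).2, ?_⟩
      intro f hf
      rcases List.mem_cons.mp hf with rfl | hf'
      · rw [hse]; exact (hMa ⟨a, hDelV a⟩ rfl).1
      · simp at hf'
    · by_cases hxb : x.1 = b
      · rw [(hMb x hxb).1] at hv; simp at hv
      · rw [(hMx x hxa hxb).1] at hv
        obtain ⟨L, w, hw, hwr, hLl⟩ := h7 x.1 hv
        have hwa : w = a := hI.uniq_root hwr hpa
        subst hwa
        have hcond : ∀ e ∈ L, (e ∉ r2.DelE H g ∧ H.s e ≠ a ∧ H.s e ≠ b) ∧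
            H.l (H.s e) = some NodeLab.tri := by
          intro e he
          have hltri := hLl e he
          have hsna : H.s e ≠ a := fun h => by rw [h, hla] at hltri; simp at hltri
          have hsnb : H.s e ≠ b := fun h => by rw [h, hlb] at hltri; simp at hltri
          exact ⟨⟨fun hd => hsna (by rw [(hDelE e).mp hd, hsa]), hsna, hsnb⟩, hltri⟩
        have lift : ∀ (L' : List H.E) (v : H.V),
            DW H v L' a →
            (∀ e ∈ L', (e ∉ r2.DelE H g ∧ H.s e ≠ a ∧ H.s e ≠ b) ∧
              H.l (H.s e) = some NodeLab.tri) →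
            ∃ LM, DW M (Sum.inl ⟨v, hDelV v⟩) LM (Sum.inl ⟨a, hDelV a⟩) ∧
              ∀ f ∈ LM, M.l (M.s f) = some NodeLab.tri := by
          intro L'
          induction L' with
          | nil =>
            intro v hwk _
            exact ⟨[], hcongr _ _ hwk, by simp⟩
          | cons e L'' ih =>
            intro v hwk hcd
            obtain ⟨⟨hce, hcsa, hcsb⟩, hcl⟩ := hcd e List.mem_cons_self
            obtain ⟨LM, hLM, hLMl⟩ :=
              ih (H.t e) hwk.2 (fun f hf => hcd f (List.mem_cons_of_mem _ hf))
            refine ⟨Sum.inl ⟨e, hce⟩ :: LM, ⟨hcongr _ _ hwk.1, hLM⟩, ?_⟩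
            intro f hf
            rcases List.mem_cons.mp hf with rfl | hf'
            · show M.l (Sum.inl ⟨H.s e, hDelV _⟩) = _
              rw [(hMx ⟨H.s e, hDelV _⟩ hcsa hcsb).1]
              exact hcl
            · exact hLMl f hf'
        obtain ⟨LM, hLM, hLMl⟩ := lift L x.1 hw hcond
        refine ⟨LM ++ [eh], Sum.inl ⟨b, hDelV b⟩, dw_append ?_ hwalk_eh,
          (hMb ⟨b, hDelV b⟩ rfl).2, ?_⟩
        · exact hLM
        · intro f hf
          rcases List.mem_append.mp hf with hf' | hf'
          · exact hLMl f hf'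
          · rcases List.mem_cons.mp hf' with rfl | h0
            · rw [hse]; exact (hMa ⟨a, hDelV a⟩ rfl).1
            · simp at h0

end Pres2

lemma inv_step {G H : RGraph NodeLab Unit} (hs : GTStep TreeRules G H) (hI : TRInv G) :
    TRInv H := by
  obtain ⟨r, hr, g, hg, ⟨i⟩⟩ := hs
  simp only [TreeRules, Set.mem_insert_iff, Set.mem_singleton_iff] at hr
  rcases hr with rfl | rfl | rfl
  · exact (pres0 hI g hg).iso i
  · exact (pres1 hI g hg).iso i
  · exact (pres2 hI g hg).iso i

lemma inv_star {G H : RGraph NodeLab Unit} (hd : GTDerivStar TreeRules G H) (hI : TRInv G) :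
    TRInv H := by
  rcases hd with hrt | hiso
  · induction hrt with
    | refl => exact hI
    | tail _ hstep ih => exact inv_step hstep ih
  · exact hI.iso hiso.some

/-- If `G` is an input tree and `G ⇒*_𝓡 H`, then the (unique) root node of `H`
has no `△`-labelled children. -/
theorem root_has_no_triangle_child (G H : RGraph NodeLab Unit)
    (hG : IsInputGraph G) (hGtree : IsTree G)
    (hd : GTDerivStar TreeRules G H) :
    ∀ v : H.V, H.p v = some true →
      ¬ ∃ e : H.E, H.s e = v ∧ H.l (H.t e) = some .tri :=
  (inv_star hd (inv_init hG hGtree)).goal
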